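/- Let 0 < α ≤ 1 and k > 0. The identity E_{α,α}(-2 k^α t^α) = E_{α,α}(-k^α t^α) · E_α(-k^α t^α) holds for all t ≥ 0 if and only if α = 1. -/

import Mathlib

/-- The Mittag-Leffler function `E_α(z) = ∑_{k=0}^∞ z^k / Γ(αk + 1)`. -/
noncomputable def mittagLeffler (α z : ℝ) : ℝ :=
  ∑' k : ℕ, z ^ k / Real.Gamma (α * k + 1)

/-- The two-parameter Mittag-Leffler function `E_{α,β}(z) = ∑_{k=0}^∞ z^k / Γ(αk + β)`. -/
noncomputable def mittagLeffler2 (α β z : ℝ) : ℝ :=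
  ∑' k : ℕ, z ^ k / Real.Gamma (α * k + β)

open Real Filter

lemma gamma_ratio {α : ℝ} (hα : 0 < α) (hα1 : α ≤ 1) {y : ℝ} (hy : 0 < y) :
    y * Real.Gamma y ≤ Real.Gamma (y + α) * (y + α) ^ (1 - α) := by
  have hyα : 0 < y + α := by linarith
  have hyα1 : 0 < y + α + 1 := by linarith
  have hconv := Real.convexOn_log_Gamma.2 (Set.mem_Ioi.2 hyα) (Set.mem_Ioi.2 hyα1)
      hα.le (by linarith : (0:ℝ) ≤ 1 - α) (by ring)
  have hpt : α • (y + α) + (1 - α) • (y + α + 1) = y + 1 := by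
    simp only [smul_eq_mul]; ring
  rw [hpt] at hconv
  simp only [smul_eq_mul, Function.comp_apply] at hconv
  rw [Real.Gamma_add_one hy.ne', Real.Gamma_add_one hyα.ne'] at hconv
  rw [Real.log_mul hy.ne' (Real.Gamma_pos_of_pos hy).ne',
    Real.log_mul hyα.ne' (Real.Gamma_pos_of_pos hyα).ne'] at hconv
  have key : Real.log (y * Real.Gamma y) ≤
      Real.log (Real.Gamma (y + α) * (y + α) ^ (1 - α)) := by
    rw [Real.log_mul hy.ne' (Real.Gamma_pos_of_pos hy).ne',
      Real.log_mul (Real.Gamma_pos_of_pos hyα).ne' (Real.rpow_pos_of_pos hyα _).ne',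
      Real.log_rpow hyα]
    nlinarith [hconv]
  have h1 : 0 < y * Real.Gamma y := mul_pos hy (Real.Gamma_pos_of_pos hy)
  have h2 : 0 < Real.Gamma (y + α) * (y + α) ^ (1 - α) :=
    mul_pos (Real.Gamma_pos_of_pos hyα) (Real.rpow_pos_of_pos hyα _)
  exact (Real.log_le_log_iff h1 h2).1 key

lemma summable_ml {α β : ℝ} (c : ℝ) (hα : 0 < α) (hα1 : α ≤ 1) (hβ : 0 < β) (hc : 0 ≤ c) :
    Summable (fun n : ℕ => c ^ n / Real.Gamma (α * n + β)) := by
  apply summable_of_ratio_norm_eventually_le (r := 1/2) (by norm_num)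
  have htend : Tendsto (fun n : ℕ => α * n + β) atTop atTop := by
    apply Tendsto.atTop_add _ tendsto_const_nhds
    exact Tendsto.const_mul_atTop hα tendsto_natCast_atTop_atTop
  filter_upwards [htend.eventually_ge_atTop (max 1 ((4 * c + 1) ^ (1/α)))] with n hn
  set y := α * n + β with hy_def
  have hy1 : (1:ℝ) ≤ y := le_trans (le_max_left _ _) hn
  have hy : (0:ℝ) < y := by linarith
  have hyα : 0 < y + α := by linarith
  -- y ^ α ≥ 4c+1
  have hyc : 4 * c + 1 ≤ y ^ α := by
    have h0 : (0:ℝ) ≤ 4 * c + 1 := by linarith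
    have h := Real.rpow_le_rpow (Real.rpow_nonneg h0 _) (le_trans (le_max_right _ _) hn) hα.le
    rwa [← Real.rpow_mul h0, one_div_mul_cancel hα.ne', Real.rpow_one] at h
  -- main ratio estimate
  have hG : 0 < Real.Gamma y := Real.Gamma_pos_of_pos hy
  have hGα : 0 < Real.Gamma (y + α) := Real.Gamma_pos_of_pos hyα
  have hr := gamma_ratio hα hα1 hy
  have h2y : (y + α) ^ (1 - α) ≤ 2 * y ^ (1 - α) := by
    have h1 : (y + α) ^ (1 - α) ≤ (2 * y) ^ (1 - α) :=
      Real.rpow_le_rpow hyα.le (by linarith) (by linarith)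
    rw [Real.mul_rpow (by norm_num) hy.le] at h1
    have h2 : (2:ℝ) ^ (1 - α) ≤ 2 := by
      have h3 := Real.rpow_le_rpow_of_exponent_le (by norm_num : (1:ℝ) ≤ 2)
        (by linarith : 1 - α ≤ 1)
      rwa [Real.rpow_one] at h3
    nlinarith [Real.rpow_nonneg hy.le (1 - α)]
  have hP : 0 < (y + α) ^ (1 - α) := Real.rpow_pos_of_pos hyα _
  have hkey : 2 * c * (y + α) ^ (1 - α) ≤ y := by
    have hsplit : y ^ (1 - α) * y ^ α = y := by
      rw [← Real.rpow_add hy]; simp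
    nlinarith [Real.rpow_nonneg hy.le (1 - α), Real.rpow_pos_of_pos hy (1-α)]
  have hGge : 2 * c * Real.Gamma y ≤ Real.Gamma (y + α) := by
    nlinarith [mul_le_mul_of_nonneg_right hkey hG.le, hr]
  have hidx : α * (n + 1 : ℕ) + β = y + α := by push_cast [hy_def]; ring
  rw [hidx]
  have hnn1 : 0 ≤ c ^ (n+1) / Real.Gamma (y + α) := by positivity
  have hnn2 : 0 ≤ c ^ n / Real.Gamma y := by positivity
  rw [Real.norm_eq_abs, Real.norm_eq_abs, abs_of_nonneg hnn1, abs_of_nonneg hnn2]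
  rw [div_le_iff₀ hGα, pow_succ]
  have : 1/2 * (c ^ n / Real.Gamma y) * Real.Gamma (y + α)
      = c ^ n * ((Real.Gamma (y+α)) / (2 * Real.Gamma y)) := by ring
  rw [this]
  apply mul_le_mul_of_nonneg_left _ (pow_nonneg hc n)
  rw [le_div_iff₀ (by positivity)]
  nlinarith [hGge]

section
variable {α β : ℝ} (hα : 0 < α) (hα1 : α ≤ 1) (hβ : 0 < β)
include hα hα1 hβ

lemma ml2_bound : ∀ z : ℝ, |z| ≤ 1 →
    |mittagLeffler2 α β z - 1 / Real.Gamma β - z / Real.Gamma (α + β)|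
      ≤ (∑' n : ℕ, 1 / Real.Gamma (α * (n+2) + β)) * z ^ 2 := by
  intro z hz
  have hs1 : Summable (fun n : ℕ => |z| ^ n / Real.Gamma (α * n + β)) :=
    summable_ml |z| hα hα1 hβ (abs_nonneg z)
  have hs : Summable (fun n : ℕ => z ^ n / Real.Gamma (α * n + β)) := by
    apply Summable.of_abs
    refine hs1.congr fun n => ?_
    rw [abs_div, abs_pow, abs_of_pos (Real.Gamma_pos_of_pos (by positivity))]
  have hsplit := hs.sum_add_tsum_nat_add 2
  have hrange : ∑ i ∈ Finset.range 2, z ^ i / Real.Gamma (α * i + β)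
      = 1 / Real.Gamma β + z / Real.Gamma (α + β) := by
    rw [Finset.sum_range_succ, Finset.sum_range_one]
    norm_num
  have hM : ∀ m : ℕ, |z ^ (m + 2) / Real.Gamma (α * (m+2) + β)|
      ≤ z ^ 2 * (1 / Real.Gamma (α * (m+2) + β)) := by
    intro m
    have hGp : 0 < Real.Gamma (α * (m+2) + β) := Real.Gamma_pos_of_pos (by positivity)
    rw [abs_div, abs_of_pos hGp, abs_pow, pow_add, div_eq_mul_inv, div_eq_mul_inv, one_mul]
    have h1 : |z| ^ m ≤ 1 := pow_le_one₀ (abs_nonneg z) hz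
    have h2 : |z| ^ 2 = z ^ 2 := sq_abs z
    have h3 : (0:ℝ) ≤ (Real.Gamma (α * (m+2) + β))⁻¹ := by positivity
    rw [h2]
    nlinarith [mul_le_mul_of_nonneg_right h1 (mul_nonneg (sq_nonneg z) h3)]
  have hsum2 : Summable (fun m : ℕ => z ^ (m + 2) / Real.Gamma (α * (m+2) + β)) := by
    have := (summable_nat_add_iff 2).2 hs
    convert this using 2 with m
    · rfl
    push_cast; ring_nf
  have hsumM : Summable (fun m : ℕ => (1:ℝ) / Real.Gamma (α * (m+2) + β)) := by
    have h1 := (summable_nat_add_iff 2).2 (summable_ml 1 hα hα1 hβ zero_le_one)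
    convert h1 using 2 with m
    · rfl
    push_cast; ring_nf
  have htail : |∑' m : ℕ, z ^ (m + 2) / Real.Gamma (α * (m+2) + β)|
      ≤ (∑' m : ℕ, 1 / Real.Gamma (α * (m+2) + β)) * z ^ 2 := by
    calc |∑' m : ℕ, z ^ (m + 2) / Real.Gamma (α * (m+2) + β)|
        ≤ ∑' m : ℕ, |z ^ (m + 2) / Real.Gamma (α * (m+2) + β)| := by
          simpa only [Real.norm_eq_abs] using
            norm_tsum_le_tsum_norm (f := fun m : ℕ => z ^ (m + 2) / Real.Gamma (α * (m+2) + β))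
              (by simpa only [Real.norm_eq_abs] using hsum2.abs)
      _ ≤ ∑' m : ℕ, z ^ 2 * (1 / Real.Gamma (α * (m+2) + β)) := by
          apply Summable.tsum_le_tsum hM (hsum2.abs) (hsumM.mul_left _)
      _ = (∑' m : ℕ, 1 / Real.Gamma (α * (m+2) + β)) * z ^ 2 := by
          rw [tsum_mul_left, mul_comm]
  have hexp : mittagLeffler2 α β z - 1 / Real.Gamma β - z / Real.Gamma (α + β)
      = ∑' m : ℕ, z ^ (m + 2) / Real.Gamma (α * (m+2) + β) := by
    rw [mittagLeffler2, ← hsplit, hrange]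
    push_cast
    ring
  rw [hexp]
  exact htail


lemma ml2_zero : mittagLeffler2 α β 0 = 1 / Real.Gamma β := by
  have h := ml2_bound hα hα1 hβ 0 (by norm_num)
  norm_num at h
  rw [one_div]
  linarith

lemma ml2_hasDerivAt : HasDerivAt (mittagLeffler2 α β) (1 / Real.Gamma (α + β)) 0 := by
  rw [hasDerivAt_iff_isLittleO, Asymptotics.isLittleO_iff]
  intro ε hε
  set M := ∑' n : ℕ, 1 / Real.Gamma (α * (n+2) + β) with hMdef
  have hM0 : 0 ≤ M := tsum_nonneg (fun n => by positivity)
  rw [Metric.eventually_nhds_iff]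
  refine ⟨min 1 (ε / (M + 1)), by positivity, fun z hz => ?_⟩
  rw [Real.dist_eq, sub_zero] at hz
  have hz1 : |z| ≤ 1 := le_of_lt (lt_of_lt_of_le hz (min_le_left _ _))
  have hz2 : |z| ≤ ε / (M+1) := le_of_lt (lt_of_lt_of_le hz (min_le_right _ _))
  have h := ml2_bound hα hα1 hβ z hz1
  rw [ml2_zero hα hα1 hβ]
  simp only [sub_zero, smul_eq_mul, Real.norm_eq_abs]
  have heq : mittagLeffler2 α β z - 1 / Real.Gamma β - z * (1 / Real.Gamma (α + β))
      = mittagLeffler2 α β z - 1 / Real.Gamma β - z / Real.Gamma (α + β) := by ring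
  rw [heq]
  calc |mittagLeffler2 α β z - 1 / Real.Gamma β - z / Real.Gamma (α + β)|
      ≤ M * z ^ 2 := h
    _ ≤ ε * |z| := by
        have hsq : z ^ 2 = |z| * |z| := by rw [← sq_abs]; ring
        rw [hsq, ← mul_assoc]
        apply mul_le_mul_of_nonneg_right _ (abs_nonneg z)
        have : M * |z| ≤ M * (ε / (M+1)) := mul_le_mul_of_nonneg_left hz2 hM0
        calc M * |z| ≤ M * (ε / (M+1)) := this
          _ ≤ ε := by
              rw [mul_div_assoc', div_le_iff₀ (by linarith)]
              nlinarith

end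


-- Real Beta identity for a = α+1, α ≥ 0
lemma beta_real {a : ℝ} (ha : 0 < a) :
    Real.Gamma a * Real.Gamma a
      = Real.Gamma (a + a) * ∫ t in (0:ℝ)..1, t ^ (a-1) * (1-t) ^ (a-1) := by
  have hre : 0 < Complex.re (a : ℂ) := by simpa using ha
  have h := Complex.Gamma_mul_Gamma_eq_betaIntegral hre hre
  have hbeta : Complex.betaIntegral a a
      = ((∫ t in (0:ℝ)..1, t ^ (a-1) * (1-t) ^ (a-1) : ℝ) : ℂ) := by
    rw [Complex.betaIntegral]
    rw [← intervalIntegral.integral_ofReal]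
    apply intervalIntegral.integral_congr
    intro x hx
    rw [Set.uIcc_of_le (by norm_num : (0:ℝ) ≤ 1)] at hx
    obtain ⟨hx0, hx1⟩ := hx
    simp only [Complex.ofReal_mul]
    rw [Complex.ofReal_cpow hx0, Complex.ofReal_cpow (by linarith : (0:ℝ) ≤ 1 - x)]
    push_cast
    ring
  rw [hbeta, ← Complex.ofReal_add, Complex.Gamma_ofReal, Complex.Gamma_ofReal] at h
  exact_mod_cast h

lemma integral_tmul : (∫ t in (0:ℝ)..1, t * (1-t)) = 1/6 := by
  have : ∀ t : ℝ, t * (1-t) = t - t^2 := fun t => by ring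
  simp_rw [this]
  rw [intervalIntegral.integral_sub (intervalIntegral.intervalIntegrable_id)
    (intervalIntegral.intervalIntegrable_pow 2)]
  simp [integral_id, integral_pow]
  norm_num

lemma four_rpow_ineq {s : ℝ} (hs : 0 < s) (hs1 : s ≤ 1) : 3 < 4 ^ s * (3 - 2 * s) := by
  set L := Real.log 4 with hLdef
  have hL4 : Real.log 4 = 2 * Real.log 2 := by
    rw [show (4:ℝ) = 2^2 by norm_num, Real.log_pow]; push_cast; ring
  have hLlb : 1.3862943 < L := by rw [hLdef, hL4]; nlinarith [Real.log_two_gt_d9]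
  have hLub : L < 1.3862944 := by rw [hLdef, hL4]; nlinarith [Real.log_two_lt_d9]
  have h4 : (4:ℝ) ^ s = Real.exp (L * s) := by
    rw [Real.rpow_def_of_pos (by norm_num)]
  have hexp : Real.exp (L * s) = (Real.exp (L * s / 3)) ^ 3 := by
    rw [← Real.exp_nat_mul]
    norm_num
    ring
  have hlb : (1 + L * s / 3) ^ 3 ≤ (Real.exp (L * s / 3)) ^ 3 := by
    have := Real.add_one_le_exp (L * s / 3)
    apply pow_le_pow_left₀ (by positivity) (by linarith)
  have h32 : (0:ℝ) < 3 - 2 * s := by linarith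
  have hmain : 3 < (1 + L * s / 3) ^ 3 * (3 - 2 * s) := by
    have hs2 : s^2 ≤ s := by nlinarith
    have hs3 : s^3 ≤ s := by nlinarith [sq_nonneg s]
    have hs4 : s^4 ≤ s := by nlinarith [sq_nonneg s, sq_nonneg (s*s)]
    have hc2 : L^2 - 2*L ≤ 0 := by nlinarith
    have hc3 : L^3/9 - 2*L^2/3 ≤ 0 := by nlinarith
    have hc4 : -(2*L^3/27) ≤ 0 := by nlinarith
    have hsum : 0 < L - 2 + L^2/3 + L^3/27 := by nlinarith
    nlinarith [mul_le_mul_of_nonpos_left hs2 hc2, mul_le_mul_of_nonpos_left hs3 hc3,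
      mul_le_mul_of_nonpos_left hs4 hc4, mul_pos hsum hs]
  calc (3:ℝ) < (1 + L * s / 3) ^ 3 * (3 - 2 * s) := hmain
    _ ≤ (Real.exp (L * s / 3)) ^ 3 * (3 - 2 * s) := by
        apply mul_le_mul_of_nonneg_right hlb h32.le
    _ = 4 ^ s * (3 - 2 * s) := by rw [h4, hexp]

lemma gamma_ne {α : ℝ} (hα : 0 < α) (hα1 : α < 1) :
    Real.Gamma α * Real.Gamma (α + 1) ≠ Real.Gamma (2 * α) := by
  intro hEq
  set I := ∫ t in (0:ℝ)..1, t ^ α * (1-t) ^ α with hIdef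
  have hbeta := beta_real (show (0:ℝ) < α + 1 by linarith)
  have hbeta' : Real.Gamma (α+1) * Real.Gamma (α+1) = Real.Gamma (α+1+(α+1)) * I := by
    rw [hbeta, hIdef]
    congr 1
    apply intervalIntegral.integral_congr
    intro x _
    norm_num
  have h2α : (0:ℝ) < 2*α := by linarith
  have hG2a1 : Real.Gamma (2*α+1) = 2*α * Real.Gamma (2*α) := Real.Gamma_add_one h2α.ne'
  have hG2a2 : Real.Gamma (α+1+(α+1)) = (2*α+1) * Real.Gamma (2*α+1) := by
    rw [show α+1+(α+1) = (2*α+1)+1 by ring, Real.Gamma_add_one (by linarith : (2*α+1) ≠ 0)]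
  have hGa1 : Real.Gamma (α+1) = α * Real.Gamma α := Real.Gamma_add_one hα.ne'
  have hGpos : 0 < Real.Gamma (2*α) := Real.Gamma_pos_of_pos h2α
  have hI : I = 1 / (2*(2*α+1)) := by
    have e1 : α * Real.Gamma (2*α) = (2*α+1)*(2*α)*Real.Gamma (2*α)*I := by
      calc α * Real.Gamma (2*α) = α * (Real.Gamma α * Real.Gamma (α+1)) := by rw [hEq]
        _ = Real.Gamma (α+1) * Real.Gamma (α+1) := by rw [hGa1]; ring
        _ = Real.Gamma (α+1+(α+1)) * I := hbeta'
        _ = (2*α+1)*(2*α)*Real.Gamma (2*α)*I := by rw [hG2a2, hG2a1]; ring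
    have e2 : α = (2*α+1)*(2*α)*I :=
      mul_right_cancel₀ hGpos.ne'
        (show α * Real.Gamma (2*α) = ((2*α+1)*(2*α)*I) * Real.Gamma (2*α) by
          linear_combination e1)
    have e3 : (1:ℝ) = 2*(2*α+1)*I :=
      mul_left_cancel₀ hα.ne'
        (show α * 1 = α * (2*(2*α+1)*I) by linear_combination e2)
    rw [eq_div_iff (by positivity : (2:ℝ)*(2*α+1) ≠ 0)]
    linear_combination -e3
  have hrpow_cont : Continuous (fun x : ℝ => x ^ α) :=
    continuous_iff_continuousAt.2 fun x => Real.continuousAt_rpow_const x α (Or.inr hα.le)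
  have hcont : Continuous (fun t : ℝ => t ^ α * (1-t) ^ α) :=
    (hrpow_cont).mul (hrpow_cont.comp (continuous_const.sub continuous_id))
  have hIlb : 4 ^ (1-α) * (1/6 : ℝ) ≤ I := by
    have hint1 : IntervalIntegrable (fun t : ℝ => 4 ^ (1-α) * (t * (1-t)))
        MeasureTheory.volume 0 1 := by
      apply Continuous.intervalIntegrable
      continuity
    have hint2 : IntervalIntegrable (fun t : ℝ => t ^ α * (1-t) ^ α)
        MeasureTheory.volume 0 1 := hcont.intervalIntegrable 0 1
    have hpt : ∀ t ∈ Set.Icc (0:ℝ) 1, 4 ^ (1-α) * (t * (1-t)) ≤ t ^ α * (1-t) ^ α := by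
      intro t ht
      obtain ⟨ht0, ht1⟩ := ht
      have h1t : (0:ℝ) ≤ 1 - t := by linarith
      rw [← Real.mul_rpow ht0 h1t]
      set u := t * (1-t) with hu
      have hu0 : 0 ≤ u := mul_nonneg ht0 h1t
      have hu4 : u ≤ 1/4 := by nlinarith [sq_nonneg (t - 1/2)]
      rcases eq_or_lt_of_le hu0 with h|h
      · rw [← h, Real.zero_rpow hα.ne', mul_zero]
      · have hupow : u ^ α = u ^ (α - 1) * u := by
          rw [← Real.rpow_add_one h.ne' (α - 1)]
          norm_num
        rw [hupow]
        apply mul_le_mul_of_nonneg_right _ hu0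
        have e2 : u ^ (α-1) = (u ^ (1-α))⁻¹ := by
          rw [show α - 1 = -(1-α) by ring, Real.rpow_neg hu0]
        have e3 : u ^ (1-α) ≤ ((4:ℝ) ^ (1-α))⁻¹ := by
          have := Real.rpow_le_rpow hu0 hu4 (by linarith : (0:ℝ) ≤ 1-α)
          rwa [show (1/4 : ℝ) = 4⁻¹ by norm_num,
            Real.inv_rpow (by norm_num : (0:ℝ) ≤ 4)] at this
        rw [e2]
        have h4pos : (0:ℝ) < 4 ^ (1-α) := Real.rpow_pos_of_pos (by norm_num) _
        have hupos : (0:ℝ) < u ^ (1-α) := Real.rpow_pos_of_pos h _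
        calc (4:ℝ) ^ (1-α) = (((4:ℝ) ^ (1-α))⁻¹)⁻¹ := (inv_inv _).symm
          _ ≤ (u ^ (1-α))⁻¹ := by
              apply inv_anti₀ hupos e3
    have hmono := intervalIntegral.integral_mono_on (by norm_num : (0:ℝ) ≤ 1) hint1 hint2 hpt
    rwa [intervalIntegral.integral_const_mul, integral_tmul] at hmono
  have hkey := four_rpow_ineq (show 0 < 1 - α by linarith) (by linarith)
  have h4pos : (0:ℝ) < 4 ^ (1-α) := Real.rpow_pos_of_pos (by norm_num) _
  rw [hI] at hIlb
  have h2a1 : (0:ℝ) < 2*(2*α+1) := by linarith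
  have hIlb' : 4^(1-α) / 6 ≤ 1 / (2*(2*α+1)) := by rwa [mul_one_div] at hIlb
  rw [div_le_div_iff₀ (by norm_num) h2a1] at hIlb'
  nlinarith [hkey, h4pos, hIlb']

lemma ml2_one_one (z : ℝ) : mittagLeffler2 1 1 z = Real.exp z := by
  rw [mittagLeffler2, Real.exp_eq_exp_ℝ, NormedSpace.exp_eq_tsum_div]
  congr 1
  funext n
  rw [show (1:ℝ) * n + 1 = (n:ℝ) + 1 by ring, Real.Gamma_nat_eq_factorial]

theorem mittagLeffler2_identity_iff (α k : ℝ) (hα : 0 < α) (hα1 : α ≤ 1) (hk : 0 < k) :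
    (∀ t : ℝ, 0 ≤ t →
      mittagLeffler2 α α (-2 * k ^ α * t ^ α) =
        mittagLeffler2 α α (-(k ^ α) * t ^ α) * mittagLeffler α (-(k ^ α) * t ^ α)) ↔
      α = 1 := by
  constructor
  · intro h
    by_contra hne
    have hlt : α < 1 := lt_of_le_of_ne hα1 hne
    have hkα : (0:ℝ) < k ^ α := Real.rpow_pos_of_pos hk α
    -- the two functions agree on Ici 0
    have hFG : ∀ x ∈ Set.Ici (0:ℝ),
        mittagLeffler2 α α (-2 * x) =
          mittagLeffler2 α α (-x) * mittagLeffler2 α 1 (-x) := by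
      intro x hx
      have hx0 : (0:ℝ) ≤ x := hx
      set t : ℝ := x ^ (1/α) / k with htdef
      have ht0 : 0 ≤ t := div_nonneg (Real.rpow_nonneg hx0 _) hk.le
      have htα : k ^ α * t ^ α = x := by
        rw [htdef, Real.div_rpow (Real.rpow_nonneg hx0 _) hk.le,
          ← Real.rpow_mul hx0, one_div_mul_cancel hα.ne', Real.rpow_one]
        field_simp
      have h1 : -2 * k ^ α * t ^ α = -2 * x := by rw [mul_assoc, htα]
      have h2 : -(k ^ α) * t ^ α = -x := by
        rw [neg_mul, htα]
      have := h t ht0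
      rw [h1, h2] at this
      exact this
    -- derivatives at 0
    have hD2 : HasDerivAt (mittagLeffler2 α α) (1 / Real.Gamma (α + α)) 0 :=
      ml2_hasDerivAt hα hα1 hα
    have hD1 : HasDerivAt (mittagLeffler2 α 1) (1 / Real.Gamma (α + 1)) 0 :=
      ml2_hasDerivAt hα hα1 one_pos
    have hv2 : mittagLeffler2 α α 0 = 1 / Real.Gamma α := ml2_zero hα hα1 hα
    have hv1 : mittagLeffler2 α 1 0 = 1 := by
      rw [ml2_zero hα hα1 one_pos, Real.Gamma_one]; norm_num
    have hiF : HasDerivAt (fun x : ℝ => -2 * x) (-2) 0 := by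
      simpa using (hasDerivAt_id (0:ℝ)).const_mul (-2)
    have hiN : HasDerivAt (fun x : ℝ => -x) (-1) 0 := by
      exact hasDerivAt_neg' (0:ℝ)
    have hD2' : HasDerivAt (mittagLeffler2 α α) (1 / Real.Gamma (α + α)) ((fun x : ℝ => -2*x) 0) := by
      simpa using hD2
    have hF : HasDerivAt (fun x : ℝ => mittagLeffler2 α α (-2 * x))
        (1 / Real.Gamma (α + α) * (-2)) 0 := hD2'.comp 0 hiF
    have hD2'' : HasDerivAt (mittagLeffler2 α α) (1 / Real.Gamma (α + α)) ((fun x : ℝ => -x) 0) := by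
      simpa using hD2
    have hD1'' : HasDerivAt (mittagLeffler2 α 1) (1 / Real.Gamma (α + 1)) ((fun x : ℝ => -x) 0) := by
      simpa using hD1
    have hGa : HasDerivAt (fun x : ℝ => mittagLeffler2 α α (-x))
        (1 / Real.Gamma (α + α) * (-1)) 0 := hD2''.comp 0 hiN
    have hGb : HasDerivAt (fun x : ℝ => mittagLeffler2 α 1 (-x))
        (1 / Real.Gamma (α + 1) * (-1)) 0 := hD1''.comp 0 hiN
    have hG : HasDerivAt (fun x : ℝ => mittagLeffler2 α α (-x) * mittagLeffler2 α 1 (-x))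
        (1 / Real.Gamma (α + α) * (-1) * (mittagLeffler2 α 1 (-0))
          + (mittagLeffler2 α α (-0)) * (1 / Real.Gamma (α + 1) * (-1))) 0 := hGa.mul hGb
    rw [neg_zero, hv1, hv2] at hG
    -- uniqueness of derivatives within Ici 0
    have hFw := hF.hasDerivWithinAt (s := Set.Ici (0:ℝ))
    have hGw := hG.hasDerivWithinAt (s := Set.Ici (0:ℝ))
    have hFw' : HasDerivWithinAt (fun x : ℝ => mittagLeffler2 α α (-2 * x))
        (1 / Real.Gamma (α + α) * (-1) * 1 + 1 / Real.Gamma α * (1 / Real.Gamma (α + 1) * (-1)))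
        (Set.Ici (0:ℝ)) 0 :=
      hGw.congr (fun y hy => hFG y hy) (hFG 0 Set.self_mem_Ici)
    have hEqD := UniqueDiffWithinAt.eq_deriv _ (uniqueDiffOn_Ici (0:ℝ) 0 Set.self_mem_Ici)
      hFw hFw'
    -- derive the Gamma identity
    have hG2pos : 0 < Real.Gamma (α + α) := Real.Gamma_pos_of_pos (by linarith)
    have hGapos : 0 < Real.Gamma α := Real.Gamma_pos_of_pos hα
    have hGa1pos : 0 < Real.Gamma (α + 1) := Real.Gamma_pos_of_pos (by linarith)
    have key : Real.Gamma α * Real.Gamma (α + 1) = Real.Gamma (2 * α) := by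
      rw [show (2:ℝ) * α = α + α by ring]
      field_simp at hEqD
      rw [show α * (1+1) = α + α by ring] at hEqD
      have hcan := mul_left_cancel₀ hG2pos.ne'
        (show Real.Gamma (α+α) * (Real.Gamma α * Real.Gamma (α+1))
            = Real.Gamma (α+α) * Real.Gamma (α+α) by linear_combination (-Real.Gamma (α+α)) * hEqD)
      linarith [hcan]
    exact gamma_ne hα hlt key
  · rintro rfl
    intro t ht
    rw [Real.rpow_one, Real.rpow_one]
    have hml : mittagLeffler 1 (-k * t) = mittagLeffler2 1 1 (-k * t) := rfl
    rw [show -(k) * t = -k * t by ring] at *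
    simp only [hml, ml2_one_one]
    rw [← Real.exp_add]
    congr 1
    ring
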